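/- The sum over all S-paths S of n+1 coordinates of the product over j with S_j > S_{j-1} of C(j-1-S_{j-1}, j-S_j) equals the Bell number B_n. -/

import Mathlib

/-- An S-path of `n+1` coordinates: `S 0 = 0`, `S n = n`, `S j ≤ j`, nondecreasing. -/
def SPath (n : ℕ) : Type :=
  {S : Fin (n + 1) → Fin (n + 1) // (S 0 : ℕ) = 0 ∧ (S (Fin.last n) : ℕ) = n ∧
    (∀ j : Fin (n + 1), (S j : ℕ) ≤ (j : ℕ)) ∧ ∀ j k : Fin (n + 1), j ≤ k → S j ≤ S k}

noncomputable instance (n : ℕ) : Fintype (SPath n) := by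
  unfold SPath; exact Fintype.ofFinite _

/-- The value `S j` of an S-path, as a natural number. -/
def pathVal {n : ℕ} (S : SPath n) (j : ℕ) : ℕ :=
  if h : j ≤ n then (S.1 ⟨j, Nat.lt_succ_of_le h⟩ : ℕ) else n

/-- The Bell number `B n`: the number of set partitions of `{1,...,n}`. -/
noncomputable def bellNumber (n : ℕ) : ℕ := Nat.card (Finpartition (Finset.Icc 1 n))

section Aux
open Finset


theorem bellNumber_zero : bellNumber 0 = 1 := by
  unfold bellNumber
  have : (Finset.Icc 1 0 : Finset ℕ) = (⊥ : Finset ℕ) := by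
    simp [Finset.bot_eq_empty]
  rw [this]
  exact Nat.card_unique

section Transport
variable {α β : Type*} [DecidableEq α] [DecidableEq β]



/-- Transport a finpartition along a function injective on the ground set. -/
def fpMap {s : Finset α} (P : Finpartition s) (f : α → β) (hf : Set.InjOn f s) :
    Finpartition (s.image f) where
  parts := P.parts.image (Finset.image f)
  supIndep := by
    rw [Finset.supIndep_iff_pairwiseDisjoint]
    rintro x hx y hy hxy
    simp only [coe_image, Set.mem_image, mem_coe] at hx hy
    obtain ⟨p, hp, rfl⟩ := hx
    obtain ⟨q, hq, rfl⟩ := hy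
    have hpq : p ≠ q := by rintro rfl; exact hxy rfl
    have hd : Disjoint p q := P.disjoint hp hq hpq
    simp only [Function.onFun, id_eq, Finset.disjoint_left]
    rintro a ha hb
    simp only [Finset.mem_image] at ha hb
    obtain ⟨u, hu, rfl⟩ := ha
    obtain ⟨v, hv, hvu⟩ := hb
    have hus : u ∈ s := P.le hp hu
    have hvs : v ∈ s := P.le hq hv
    have : v = u := hf hvs hus hvu
    subst this
    exact (Finset.disjoint_left.1 hd hu) hv
  sup_parts := by
    ext b
    simp only [Finset.sup_image, Finset.mem_sup, Finset.mem_image, id_eq, Function.comp]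
    constructor
    · rintro ⟨p, hp, a, ha, rfl⟩
      exact ⟨a, by rw [← P.sup_parts]; exact Finset.mem_sup.2 ⟨p, hp, ha⟩, rfl⟩
    · rintro ⟨a, ha, rfl⟩
      rw [← P.sup_parts] at ha
      obtain ⟨p, hp, ha⟩ := Finset.mem_sup.1 ha
      exact ⟨p, hp, a, ha, rfl⟩
  bot_notMem := by
    simp only [Finset.bot_eq_empty, Finset.mem_image]
    rintro ⟨p, hp, h⟩
    obtain ⟨x, hx⟩ := P.nonempty_of_mem_parts hp
    exact absurd h (by simp [Finset.eq_empty_iff_forall_notMem]; exact ⟨x, hx⟩)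

theorem fpMap_parts {s : Finset α} (P : Finpartition s) (f : α → β) (hf : Set.InjOn f s) :
    (fpMap P f hf).parts = P.parts.image (Finset.image f) := rfl

/-- Finpartitions of sets in bijection have the same cardinality. -/
theorem card_finpartition_congr {s : Finset α} {t : Finset β} (f : α → β) (g : β → α)
    (hft : ∀ x ∈ s, f x ∈ t) (hgs : ∀ y ∈ t, g y ∈ s)
    (hgf : ∀ x ∈ s, g (f x) = x) (hfg : ∀ y ∈ t, f (g y) = y) :
    Nat.card (Finpartition s) = Nat.card (Finpartition t) := by
  have hf : Set.InjOn f s := fun a ha b hb h => by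
    rw [← hgf a ha, ← hgf b hb, h]
  have hg : Set.InjOn g t := fun a ha b hb h => by
    rw [← hfg a ha, ← hfg b hb, h]
  have hst : s.image f = t := by
    ext y; simp only [Finset.mem_image]
    exact ⟨fun ⟨x, hx, hxy⟩ => hxy ▸ hft x hx, fun hy => ⟨g y, hgs y hy, hfg y hy⟩⟩
  have hts : t.image g = s := by
    ext x; simp only [Finset.mem_image]
    exact ⟨fun ⟨y, hy, hyx⟩ => hyx ▸ hgs y hy, fun hx => ⟨f x, hft x hx, hgf x hx⟩⟩
  refine Nat.card_congr ⟨fun P => ((fpMap P f hf).copy hst), fun Q => ((fpMap Q g hg).copy hts),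
    fun P => ?_, fun Q => ?_⟩
  · ext p
    simp only [Finpartition.copy_parts, fpMap_parts, Finset.mem_image]
    constructor
    · rintro ⟨q, ⟨r, hr, rfl⟩, rfl⟩
      have : (Finset.image f r).image g = r := by
        ext x
        simp only [Finset.mem_image]
        constructor
        · rintro ⟨y, ⟨z, hz, rfl⟩, rfl⟩
          rwa [hgf z (P.le hr hz)]
        · intro hx; exact ⟨f x, ⟨x, hx, rfl⟩, hgf x (P.le hr hx)⟩
      rwa [this]
    · intro hp
      refine ⟨p.image f, ⟨p, hp, rfl⟩, ?_⟩
      ext x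
      simp only [Finset.mem_image]
      constructor
      · rintro ⟨y, ⟨z, hz, rfl⟩, rfl⟩
        rwa [hgf z (P.le hp hz)]
      · intro hx; exact ⟨f x, ⟨x, hx, rfl⟩, hgf x (P.le hp hx)⟩
  · ext p
    simp only [Finpartition.copy_parts, fpMap_parts, Finset.mem_image]
    constructor
    · rintro ⟨q, ⟨r, hr, rfl⟩, rfl⟩
      have : (Finset.image g r).image f = r := by
        ext x
        simp only [Finset.mem_image]
        constructor
        · rintro ⟨y, ⟨z, hz, rfl⟩, rfl⟩
          rwa [hfg z (Q.le hr hz)]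
        · intro hx; exact ⟨g x, ⟨x, hx, rfl⟩, hfg x (Q.le hr hx)⟩
      rwa [this]
    · intro hp
      refine ⟨p.image g, ⟨p, hp, rfl⟩, ?_⟩
      ext x
      simp only [Finset.mem_image]
      constructor
      · rintro ⟨y, ⟨z, hz, rfl⟩, rfl⟩
        rwa [hfg z (Q.le hp hz)]
      · intro hx; exact ⟨g x, ⟨x, hx, rfl⟩, hfg x (Q.le hp hx)⟩



theorem avoid_parts_erase {s : Finset α} (P : Finpartition s) {B : Finset α} (hB : B ∈ P.parts) :
    (P.avoid B).parts = P.parts.erase B := by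
  ext c
  simp only [Finpartition.mem_avoid, mem_erase]
  constructor
  · rintro ⟨d, hd, hdB, rfl⟩
    have hne : d ≠ B := fun h => hdB (h ▸ le_refl _)
    have hdisj : Disjoint d B := P.disjoint hd hB hne
    rw [Finset.sdiff_eq_self_of_disjoint hdisj]
    exact ⟨hne, hd⟩
  · rintro ⟨hne, hc⟩
    refine ⟨c, hc, ?_, ?_⟩
    · intro hle
      obtain ⟨x, hx⟩ := P.nonempty_of_mem_parts hc
      exact hne (P.eq_of_mem_parts hc hB hx (hle hx))
    · exact Finset.sdiff_eq_self_of_disjoint (P.disjoint hc hB hne)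

theorem card_finpartition_insert {s : Finset α} {a : α} (ha : a ∉ s) :
    Nat.card (Finpartition (insert a s)) = ∑ u ∈ s.powerset, Nat.card (Finpartition (s \ u)) := by
  classical
  rw [Nat.card_eq_fintype_card]
  have hmaps : ∀ P : Finpartition (insert a s), (P.part a).erase a ∈ s.powerset := by
    intro P
    rw [mem_powerset]
    intro x hx
    rw [mem_erase] at hx
    have := P.le (P.part_mem.2 (mem_insert_self a s)) hx.2
    rw [mem_insert] at this
    tauto
  rw [← Finset.card_univ, Finset.card_eq_sum_card_fiberwise (fun P _ => hmaps P)]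
  refine Finset.sum_congr rfl fun u hu => ?_
  rw [mem_powerset] at hu
  rw [Nat.card_eq_fintype_card, ← Finset.card_univ]
  have hane : a ∉ u := fun h => ha (hu h)
  -- key facts used for both directions
  have hground : ∀ P : Finpartition (insert a s), (P.part a).erase a = u →
      insert a s \ P.part a = s \ u := by
    intro P hPu
    have haP : a ∈ P.part a := P.mem_part (mem_insert_self a s)
    have hPa : P.part a = insert a u := by
      rw [← hPu, Finset.insert_erase haP]
    rw [hPa]
    ext x
    simp only [mem_sdiff, mem_insert, not_or]
    constructor
    · rintro ⟨hx1, hx2, hx3⟩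
      rcases hx1 with rfl | hx1
      · exact absurd rfl hx2
      · exact ⟨hx1, hx3⟩
    · rintro ⟨hx1, hx2⟩
      exact ⟨Or.inr hx1, fun h => ha (h ▸ hx1), hx2⟩
  have hb' : (insert a u : Finset α) ≠ ⊥ := by
    simp [Finset.bot_eq_empty]
  have hab' : Disjoint (s \ u) (insert a u) := by
    rw [Finset.disjoint_left]
    intro x hx
    rw [mem_sdiff] at hx
    rw [mem_insert]
    rintro (rfl | h)
    · exact ha hx.1
    · exact hx.2 h
  have hc' : (s \ u) ⊔ (insert a u) = insert a s := by
    ext x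
    simp only [sup_eq_union, mem_union, mem_sdiff, mem_insert]
    constructor
    · rintro (⟨h1, _⟩ | (rfl | h)) 
      · exact Or.inr h1
      · exact Or.inl rfl
      · exact Or.inr (hu h)
    · rintro (rfl | hx)
      · exact Or.inr (Or.inl rfl)
      · by_cases hxu : x ∈ u
        · exact Or.inr (Or.inr hxu)
        · exact Or.inl ⟨hx, hxu⟩
  refine Finset.card_bij' (fun P hP => ((P.avoid (P.part a)).copy
      (hground P (by simpa using hP))))
    (fun Q _ => Q.extend hb' hab' hc') ?_ ?_ ?_ ?_
  · intro P hP
    exact mem_univ _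
  · intro Q hQ
    simp only [mem_filter, mem_univ, true_and]
    -- part a of the extension is insert a u
    have hmem : insert a u ∈ (Q.extend hb' hab' hc').parts := by
      rw [Finpartition.extend_parts]; exact mem_insert_self _ _
    have : (Q.extend hb' hab' hc').part a = insert a u :=
      (Q.extend hb' hab' hc').part_eq_of_mem hmem (mem_insert_self a u)
    rw [this, Finset.erase_insert hane]
  · -- left inverse : extend (avoid P) = P
    intro P hP
    simp only [mem_filter, mem_univ, true_and] at hP
    ext p
    have haP : a ∈ P.part a := P.mem_part (mem_insert_self a s)
    have hPmem : P.part a ∈ P.parts := P.part_mem.2 (mem_insert_self a s)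
    have hPa : P.part a = insert a u := by
      rw [← hP, Finset.insert_erase haP]
    rw [Finpartition.extend_parts, Finpartition.copy_parts,
      avoid_parts_erase P hPmem, ← hPa, Finset.insert_erase hPmem]
  · -- right inverse : avoid (extend Q) = Q
    intro Q hQ
    have hmem : insert a u ∈ (Q.extend hb' hab' hc').parts := by
      rw [Finpartition.extend_parts]; exact mem_insert_self _ _
    have hpart : (Q.extend hb' hab' hc').part a = insert a u :=
      (Q.extend hb' hab' hc').part_eq_of_mem hmem (mem_insert_self a u)
    ext p
    rw [Finpartition.copy_parts, avoid_parts_erase _ (show (Q.extend hb' hab' hc').part a ∈ (Q.extend hb' hab' hc').parts by rw [hpart]; exact hmem), hpart,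
      Finpartition.extend_parts, Finset.erase_insert]
    intro hcontra
    have := Q.le hcontra (mem_insert_self a u)
    rw [mem_sdiff] at this
    exact ha this.1
end Transport

/-- The number of finpartitions of a finite set of naturals only depends on its size. -/
theorem card_finpartition_eq_bell (t : Finset ℕ) :
    Nat.card (Finpartition t) = bellNumber t.card := by
  set k := t.card with hk
  have e := t.orderIsoOfFin hk.symm
  unfold bellNumber
  refine card_finpartition_congr (fun x => if h : x ∈ t then ((e.symm ⟨x, h⟩ : Fin k) : ℕ) + 1 else 0)
    (fun y => if h : y - 1 < k then ((e ⟨y - 1, h⟩ : t) : ℕ) else 0) ?_ ?_ ?_ ?_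
  · intro x hx
    simp only [hx, dif_pos]
    have := (e.symm ⟨x, hx⟩).isLt
    rw [Finset.mem_Icc]
    omega
  · intro y hy
    rw [Finset.mem_Icc] at hy
    have h : y - 1 < k := by omega
    simp only [h, dif_pos]
    exact (e ⟨y - 1, h⟩).2
  · intro x hx
    simp only [hx, dif_pos]
    have h1 : ((e.symm ⟨x, hx⟩ : Fin k) : ℕ) + 1 - 1 < k := by
      have := (e.symm ⟨x, hx⟩).isLt; omega
    simp only [h1, dif_pos]
    have : (⟨((e.symm ⟨x, hx⟩ : Fin k) : ℕ) + 1 - 1, h1⟩ : Fin k) = e.symm ⟨x, hx⟩ := by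
      apply Fin.ext; simp
    rw [this, OrderIso.apply_symm_apply]
  · intro y hy
    rw [Finset.mem_Icc] at hy
    have h : y - 1 < k := by omega
    simp only [h, dif_pos]
    have hmem : ((e ⟨y - 1, h⟩ : t) : ℕ) ∈ t := (e ⟨y - 1, h⟩).2
    simp only [hmem, dif_pos]
    have : (⟨((e ⟨y - 1, h⟩ : t) : ℕ), hmem⟩ : t) = e ⟨y - 1, h⟩ := rfl
    rw [this, OrderIso.symm_apply_apply]
    simp only [Fin.val_mk]
    omega

theorem bell_rec (n : ℕ) :
    bellNumber (n + 1) = ∑ k ∈ Finset.range (n + 1), Nat.choose n k * bellNumber k := by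
  have hins : (Finset.Icc 1 (n + 1) : Finset ℕ) = insert (n + 1) (Finset.Icc 1 n) := by
    ext x; simp only [Finset.mem_Icc, Finset.mem_insert]; omega
  have hnotmem : (n + 1) ∉ Finset.Icc 1 n := by simp
  have hcard : (Finset.Icc 1 n : Finset ℕ).card = n := by simp
  unfold bellNumber
  rw [hins, card_finpartition_insert hnotmem]
  have step1 : ∀ u ∈ (Finset.Icc 1 n : Finset ℕ).powerset,
      Nat.card (Finpartition (Finset.Icc 1 n \ u)) = bellNumber (n - u.card) := by
    intro u hu
    rw [Finset.mem_powerset] at hu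
    rw [card_finpartition_eq_bell, Finset.card_sdiff_of_subset hu, hcard]
  rw [Finset.sum_congr rfl step1, Finset.sum_powerset _ (fun u => bellNumber (n - u.card)), hcard]
  have step2 : ∀ j ∈ Finset.range (n + 1),
      ∑ u ∈ Finset.powersetCard j (Finset.Icc 1 n), bellNumber (n - u.card)
        = Nat.choose n j * bellNumber (n - j) := by
    intro j hj
    rw [Finset.sum_congr rfl (fun u hu => by
      rw [(Finset.mem_powersetCard.1 hu).2]), Finset.sum_const, Finset.card_powersetCard, hcard,
      smul_eq_mul]
  rw [Finset.sum_congr rfl step2]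
  rw [← Finset.sum_range_reflect]
  refine Finset.sum_congr rfl fun k hk => ?_
  rw [Finset.mem_range] at hk
  have h2 : n + 1 - 1 - k = n - k := by omega
  rw [h2, Nat.choose_symm (by omega), Nat.sub_sub_self (by omega : k ≤ n)]
  rfl

/-- path value helper -/
def pv (n : ℕ) (S : Fin (n+1) → Fin (n+1)) (j : ℕ) : ℕ :=
  if h : j ≤ n then (S ⟨j, Nat.lt_succ_of_le h⟩ : ℕ) else 0

/-- weight of a path -/
def W (n : ℕ) (S : Fin (n+1) → Fin (n+1)) : ℕ :=
  ∏ j ∈ (Finset.Icc 1 n).filter (fun j => pv n S (j-1) < pv n S j),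
    Nat.choose (j - 1 - pv n S (j-1)) (j - pv n S j)

/-- path condition -/
def Ok (n m : ℕ) (S : Fin (n+1) → Fin (n+1)) : Prop :=
  pv n S n = m ∧ (∀ j, j ≤ n → pv n S j ≤ j) ∧
    (∀ j k, j ≤ k → k ≤ n → pv n S j ≤ pv n S k)

noncomputable instance (n m : ℕ) : DecidablePred (Ok n m) := fun _ => Classical.propDecidable _

noncomputable def G (n m : ℕ) : ℕ := ∑ S ∈ Finset.univ.filter (Ok n m), W n S

theorem pv_zero_of_ok {n m : ℕ} {S : Fin (n+1) → Fin (n+1)} (h : Ok n m S) : pv n S 0 = 0 :=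
  Nat.le_zero.1 (h.2.1 0 (Nat.zero_le n))

theorem G_zero_left : G 0 0 = 1 := by
  unfold G
  have h1 : (Finset.univ.filter (Ok 0 0) : Finset (Fin 1 → Fin 1)) = Finset.univ := by
    ext S
    simp only [mem_filter, mem_univ, true_and]
    refine ⟨fun _ => trivial, fun _ => ⟨?_, ?_, ?_⟩⟩
    · simp [pv, Fin.ext_iff, Subsingleton.elim (S ⟨0, by omega⟩) 0]
    · intro j hj; interval_cases j; simp [pv, Subsingleton.elim (S ⟨0, by omega⟩) 0]
    · intro j k hjk hk; interval_cases k; interval_cases j; exact le_rfl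
  rw [h1]
  have h2 : ∀ S : Fin 1 → Fin 1, W 0 S = 1 := by
    intro S; unfold W; simp
  rw [Finset.sum_congr rfl fun S _ => h2 S]
  simp [Fintype.card_fun]

theorem G_zero_of_gt {n m : ℕ} (h : n < m) : G n m = 0 := by
  unfold G
  convert Finset.sum_empty
  rw [Finset.filter_eq_empty_iff]
  intro S _ hOk
  have h1 := hOk.1
  have h2 := hOk.2.1 n le_rfl
  omega

def down (n : ℕ) (S : Fin (n+2) → Fin (n+2)) : Fin (n+1) → Fin (n+1) :=
  fun j => ⟨min (S j.castSucc : ℕ) n, Nat.lt_succ_of_le (min_le_right _ _)⟩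

def up (n m : ℕ) (T : Fin (n+1) → Fin (n+1)) : Fin (n+2) → Fin (n+2) :=
  fun j => if h : (j : ℕ) ≤ n then ⟨(T ⟨j, Nat.lt_succ_of_le h⟩ : ℕ), by
      have := (T ⟨j, Nat.lt_succ_of_le h⟩).isLt; omega⟩
    else ⟨min m (n+1), by omega⟩

theorem pv_down (n : ℕ) (S : Fin (n+2) → Fin (n+2)) (j : ℕ) (hj : j ≤ n) :
    pv n (down n S) j = min (pv (n+1) S j) n := by
  unfold pv down
  rw [dif_pos hj, dif_pos (show j ≤ n + 1 by omega)]
  rfl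

theorem pv_eq_down {n m : ℕ} {S : Fin (n+2) → Fin (n+2)} (hOk : Ok (n+1) m S)
    (j : ℕ) (hj : j ≤ n) : pv n (down n S) j = pv (n+1) S j := by
  rw [pv_down n S j hj]
  exact min_eq_left (le_trans (hOk.2.1 j (by omega)) hj)

theorem pv_up (n m : ℕ) (T : Fin (n+1) → Fin (n+1)) (j : ℕ) (hj : j ≤ n) :
    pv (n+1) (up n m T) j = pv n T j := by
  unfold pv up
  rw [dif_pos (show j ≤ n + 1 by omega), dif_pos hj]
  simp only [Fin.val_mk]
  rw [dif_pos hj]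

theorem pv_up_last (n m : ℕ) (T : Fin (n+1) → Fin (n+1)) (hm : m ≤ n + 1) :
    pv (n+1) (up n m T) (n+1) = m := by
  unfold pv up
  rw [dif_pos (show n + 1 ≤ n + 1 by omega)]
  simp only [Fin.val_mk]
  rw [dif_neg (by omega)]
  simp only [Fin.val_mk]
  omega

theorem Ok_down {n m m' : ℕ} {S : Fin (n+2) → Fin (n+2)} (hOk : Ok (n+1) m S)
    (hl : pv (n+1) S n = m') : Ok n m' (down n S) := by
  refine ⟨by rw [pv_eq_down hOk n le_rfl]; exact hl, fun j hj => ?_, fun j k hjk hk => ?_⟩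
  · rw [pv_eq_down hOk j hj]; exact hOk.2.1 j (by omega)
  · rw [pv_eq_down hOk j (le_trans hjk hk), pv_eq_down hOk k hk]
    exact hOk.2.2 j k hjk (by omega)

theorem Ok_up {n m m' : ℕ} {T : Fin (n+1) → Fin (n+1)} (hOk : Ok n m' T)
    (hm'm : m' ≤ m) (hm : m ≤ n + 1) : Ok (n+1) m (up n m T) := by
  refine ⟨pv_up_last n m T hm, fun j hj => ?_, fun j k hjk hk => ?_⟩
  · by_cases h : j ≤ n
    · rw [pv_up n m T j h]; exact hOk.2.1 j h
    · have : j = n + 1 := by omega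
      subst this; rw [pv_up_last n m T hm]; exact hm
  · by_cases h : k ≤ n
    · rw [pv_up n m T j (le_trans hjk h), pv_up n m T k h]
      exact hOk.2.2 j k hjk h
    · have hk1 : k = n + 1 := by omega
      subst hk1
      rw [pv_up_last n m T hm]
      by_cases hjn : j ≤ n
      · rw [pv_up n m T j hjn]
        calc pv n T j ≤ pv n T n := hOk.2.2 j n hjn le_rfl
        _ = m' := hOk.1
        _ ≤ m := hm'm
      · have : j = n + 1 := by omega
        subst this; rw [pv_up_last n m T hm]

theorem down_up (n m : ℕ) (T : Fin (n+1) → Fin (n+1)) : down n (up n m T) = T := by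
  funext j
  apply Fin.ext
  have hj : ((j.castSucc : Fin (n+2)) : ℕ) ≤ n := by
    simp only [Fin.coe_castSucc]; omega
  simp only [down, up, Fin.val_mk, dif_pos hj]
  have hjj : (⟨((j.castSucc : Fin (n+2)) : ℕ), Nat.lt_succ_of_le hj⟩ : Fin (n+1)) = j :=
    Fin.ext (by simp)
  rw [hjj]
  exact min_eq_left (Nat.le_of_lt_succ (T j).isLt)

theorem up_down {n m : ℕ} {S : Fin (n+2) → Fin (n+2)} (hOk : Ok (n+1) m S) :
    up n m (down n S) = S := by
  funext j
  apply Fin.ext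
  by_cases h : (j : ℕ) ≤ n
  · simp only [up, dif_pos h, Fin.val_mk]
    have h1 : pv n (down n S) (j : ℕ) = pv (n+1) S (j : ℕ) := pv_eq_down hOk _ h
    unfold pv at h1
    rw [dif_pos h, dif_pos (show (j : ℕ) ≤ n + 1 by omega)] at h1
    have h2 : (⟨(j : ℕ), Nat.lt_succ_of_le (show (j:ℕ) ≤ n + 1 by omega)⟩ : Fin (n+2)) = j :=
      Fin.ext rfl
    rw [h2] at h1
    exact h1
  · have hj : (j : ℕ) = n + 1 := by omega
    simp only [up, dif_neg h, Fin.val_mk]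
    have h1 := hOk.1
    unfold pv at h1
    rw [dif_pos le_rfl] at h1
    have h2 : (⟨n + 1, Nat.lt_succ_of_le le_rfl⟩ : Fin (n+2)) = j := Fin.ext (by simp [hj])
    rw [h2] at h1
    have hm : m ≤ n + 1 := by
      have := (S j).isLt
      omega
    omega

theorem W_down {n m : ℕ} {S : Fin (n+2) → Fin (n+2)} (hOk : Ok (n+1) m S) :
    W n (down n S) = ∏ j ∈ (Finset.Icc 1 n).filter
      (fun j => pv (n+1) S (j-1) < pv (n+1) S j),
      Nat.choose (j - 1 - pv (n+1) S (j-1)) (j - pv (n+1) S j) := by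
  unfold W
  have hfil : (Finset.Icc 1 n).filter (fun j => pv n (down n S) (j-1) < pv n (down n S) j)
      = (Finset.Icc 1 n).filter (fun j => pv (n+1) S (j-1) < pv (n+1) S j) := by
    apply Finset.filter_congr
    intro j hj
    rw [Finset.mem_Icc] at hj
    rw [pv_eq_down hOk (j-1) (by omega), pv_eq_down hOk j hj.2]
  rw [hfil]
  apply Finset.prod_congr rfl
  intro j hj
  simp only [Finset.mem_filter, Finset.mem_Icc] at hj
  rw [pv_eq_down hOk (j-1) (by omega), pv_eq_down hOk j (by omega)]

theorem W_split {n : ℕ} (S : Fin (n+2) → Fin (n+2)) :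
    W (n+1) S = (∏ j ∈ (Finset.Icc 1 n).filter
      (fun j => pv (n+1) S (j-1) < pv (n+1) S j),
      Nat.choose (j - 1 - pv (n+1) S (j-1)) (j - pv (n+1) S j)) *
      (if pv (n+1) S n < pv (n+1) S (n+1) then
        Nat.choose (n - pv (n+1) S n) (n + 1 - pv (n+1) S (n+1)) else 1) := by
  unfold W
  have hins : Finset.Icc 1 (n+1) = insert (n+1) (Finset.Icc 1 n) := by
    ext x; simp only [Finset.mem_Icc, Finset.mem_insert]; omega
  rw [hins, Finset.filter_insert]
  have hnm : (n+1) ∉ (Finset.Icc 1 n).filter (fun j => pv (n+1) S (j-1) < pv (n+1) S j) := by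
    simp only [Finset.mem_filter, Finset.mem_Icc]
    omega
  have hsimp : n + 1 - 1 = n := by omega
  by_cases hp : pv (n+1) S n < pv (n+1) S (n+1)
  · have hp' : pv (n+1) S (n+1-1) < pv (n+1) S (n+1) := by rw [hsimp]; exact hp
    rw [if_pos hp', Finset.prod_insert hnm, if_pos hp, hsimp]
    ring
  · have hp' : ¬ pv (n+1) S (n+1-1) < pv (n+1) S (n+1) := by rw [hsimp]; exact hp
    rw [if_neg hp', if_neg hp, mul_one]

theorem G_succ {n m : ℕ} (hm : m ≤ n + 1) :
    G (n+1) m = ∑ m' ∈ Finset.range (n+1), G n m' *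
      (if m' = m then 1 else if m' < m then Nat.choose (n - m') (n + 1 - m) else 0) := by
  unfold G
  rw [← Finset.sum_fiberwise_of_maps_to (g := fun S => pv (n+1) S n) (t := Finset.range (n+1))
    (fun S hS => by
      simp only [Finset.mem_filter, Finset.mem_univ, true_and] at hS
      simp only [Finset.mem_range]
      exact Nat.lt_succ_of_le (hS.2.1 n (by omega))) (W (n+1))]
  refine Finset.sum_congr rfl fun m' hm' => ?_
  rw [Finset.mem_range] at hm'
  by_cases hcase : m' ≤ m
  · have hfac : (if m' = m then 1 else if m' < m then Nat.choose (n - m') (n + 1 - m) else 0)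
        = (if m' = m then 1 else Nat.choose (n - m') (n + 1 - m)) := by
      by_cases h : m' = m
      · simp [h]
      · rw [if_neg h, if_neg h, if_pos (by omega)]
    rw [hfac, Finset.sum_mul]
    refine Finset.sum_nbij' (down n) (up n m) ?_ ?_ ?_ ?_ ?_
    · intro S hS
      simp only [Finset.mem_filter, Finset.mem_univ, true_and] at hS ⊢
      exact Ok_down hS.1 hS.2
    · intro T hT
      simp only [Finset.mem_filter, Finset.mem_univ, true_and] at hT ⊢
      refine ⟨Ok_up hT hcase hm, ?_⟩
      rw [pv_up n m T n le_rfl]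
      exact hT.1
    · intro S hS
      simp only [Finset.mem_filter, Finset.mem_univ, true_and] at hS
      exact up_down hS.1
    · intro T hT
      exact down_up n m T
    · intro S hS
      simp only [Finset.mem_filter, Finset.mem_univ, true_and] at hS
      rw [W_split S, ← W_down hS.1]
      congr 1
      rw [hS.2, hS.1.1]
      by_cases h : m' = m
      · rw [if_neg (by omega), if_pos h]
      · rw [if_pos (by omega), if_neg h]
  · have h1 : (Finset.univ.filter (Ok (n+1) m)).filter (fun S => pv (n+1) S n = m')
        = ∅ := by
      rw [Finset.filter_eq_empty_iff]
      intro S hS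
      simp only [Finset.mem_filter, Finset.mem_univ, true_and] at hS
      intro hc
      have := hS.2.2 n (n+1) (by omega) le_rfl
      rw [hc, hS.1] at this
      omega
    rw [h1, Finset.sum_empty, if_neg (by omega), if_neg (by omega), mul_zero]

theorem G_eq (n : ℕ) : ∀ m, G n m = Nat.choose n m * bellNumber m := by
  induction n with
  | zero =>
    intro m
    cases m with
    | zero => rw [G_zero_left]; simp [bellNumber_zero]
    | succ k => rw [G_zero_of_gt (by omega), Nat.choose_eq_zero_of_lt (by omega), zero_mul]
  | succ n ih =>
    intro m
    by_cases hm : m ≤ n + 1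
    · rw [G_succ hm]
      rw [Finset.sum_congr rfl fun m' _ => by rw [ih m']]
      cases m with
      | zero =>
        rw [Finset.sum_eq_single 0]
        · simp
        · intro b _ hb
          rw [if_neg hb, if_neg (by omega)]
          simp
        · intro h
          exact absurd (Finset.mem_range.2 (by omega)) h
      | succ k =>
        have hk : k ≤ n := by omega
        have hterm : ∀ m' ∈ Finset.range (n+1),
            Nat.choose n m' * bellNumber m' *
              (if m' = k + 1 then 1 else if m' < k + 1 then
                Nat.choose (n - m') (n + 1 - (k+1)) else 0)
            = (if m' = k + 1 then Nat.choose n m' * bellNumber m' else 0)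
              + (if m' < k + 1 then Nat.choose n k * (Nat.choose k m' * bellNumber m') else 0) := by
          intro m' hm'
          rw [Finset.mem_range] at hm'
          by_cases h1 : m' = k + 1
          · rw [if_pos h1, if_pos h1, if_neg (by omega), mul_one, add_zero]
          · rw [if_neg h1, if_neg h1]
            by_cases h2 : m' < k + 1
            · rw [if_pos h2, if_pos h2, zero_add]
              have hmk : m' ≤ k := by omega
              have e1 : n + 1 - (k + 1) = (n - m') - (k - m') := by omega
              rw [e1, Nat.choose_symm (by omega : k - m' ≤ n - m')]
              rw [show Nat.choose n m' * bellNumber m' * Nat.choose (n - m') (k - m')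
                  = Nat.choose n m' * Nat.choose (n - m') (k - m') * bellNumber m' by ring]
              rw [← Nat.choose_mul hmk]
              ring
            · rw [if_neg h2, if_neg h2, mul_zero, add_zero]
        rw [Finset.sum_congr rfl hterm, Finset.sum_add_distrib]
        have hfirst : (∑ m' ∈ Finset.range (n+1),
            if m' = k + 1 then Nat.choose n m' * bellNumber m' else 0)
            = Nat.choose n (k+1) * bellNumber (k+1) := by
          rw [Finset.sum_ite_eq' (Finset.range (n+1)) (k+1)
            (fun m' => Nat.choose n m' * bellNumber m')]
          by_cases h : k + 1 ∈ Finset.range (n+1)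
          · rw [if_pos h]
          · rw [if_neg h]
            rw [Finset.mem_range] at h
            rw [Nat.choose_eq_zero_of_lt (by omega), zero_mul]
        have hsecond : (∑ m' ∈ Finset.range (n+1),
            if m' < k + 1 then Nat.choose n k * (Nat.choose k m' * bellNumber m') else 0)
            = Nat.choose n k * bellNumber (k+1) := by
          rw [← Finset.sum_filter]
          have hfil : (Finset.range (n+1)).filter (fun m' => m' < k + 1)
              = Finset.range (k+1) := by
            ext x
            simp only [Finset.mem_filter, Finset.mem_range]
            omega
          rw [hfil, ← Finset.mul_sum, bell_rec k]
        rw [hfirst, hsecond, Nat.choose_succ_succ' n k]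
        ring
    · rw [G_zero_of_gt (by omega), Nat.choose_eq_zero_of_lt (by omega), zero_mul]

theorem spath_ok {n : ℕ} (S : SPath n) : Ok n n S.1 := by
  obtain ⟨S, h0, hn, hle, hmono⟩ := S
  refine ⟨?_, ?_, ?_⟩
  · unfold pv
    rw [dif_pos le_rfl]
    have : (⟨n, Nat.lt_succ_of_le le_rfl⟩ : Fin (n+1)) = Fin.last n := Fin.ext rfl
    rw [this]
    exact hn
  · intro j hj
    unfold pv
    rw [dif_pos hj]
    exact hle _
  · intro j k hjk hk
    unfold pv
    rw [dif_pos (le_trans hjk hk), dif_pos hk]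
    exact hmono _ _ (by exact hjk)

theorem ok_spath {n : ℕ} (S : Fin (n+1) → Fin (n+1)) (h : Ok n n S) :
    (S 0 : ℕ) = 0 ∧ (S (Fin.last n) : ℕ) = n ∧
    (∀ j : Fin (n + 1), (S j : ℕ) ≤ (j : ℕ)) ∧ ∀ j k : Fin (n + 1), j ≤ k → S j ≤ S k := by
  have hpv : ∀ j : Fin (n+1), pv n S (j : ℕ) = (S j : ℕ) := by
    intro j
    unfold pv
    rw [dif_pos (Nat.le_of_lt_succ j.isLt)]
  refine ⟨?_, ?_, ?_, ?_⟩
  · have := h.2.1 0 (Nat.zero_le n)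
    have h0 := hpv 0
    simp only [Fin.val_zero] at h0
    omega
  · have := h.1
    have hl := hpv (Fin.last n)
    simp only [Fin.val_last] at hl
    omega
  · intro j
    have := h.2.1 (j : ℕ) (Nat.le_of_lt_succ j.isLt)
    rw [hpv j] at this
    exact this
  · intro j k hjk
    have := h.2.2 (j : ℕ) (k : ℕ) hjk (Nat.le_of_lt_succ k.isLt)
    rw [hpv j, hpv k] at this
    exact this

theorem sum_spath_prod_choose_eq_bell (n : ℕ) :
    (∑ S : SPath n, ∏ j ∈ (Finset.Icc 1 n).filter
      (fun j => pathVal S (j - 1) < pathVal S j),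
      Nat.choose (j - 1 - pathVal S (j - 1)) (j - pathVal S j)) = bellNumber n := by
  classical
  have hpv : ∀ (S : SPath n) (j : ℕ), j ≤ n → pathVal S j = pv n S.1 j := by
    intro S j hj
    unfold pathVal pv
    rw [dif_pos hj, dif_pos hj]
  have hW : ∀ S : SPath n, (∏ j ∈ (Finset.Icc 1 n).filter
      (fun j => pathVal S (j - 1) < pathVal S j),
      Nat.choose (j - 1 - pathVal S (j - 1)) (j - pathVal S j)) = W n S.1 := by
    intro S
    unfold W
    have hfil : (Finset.Icc 1 n).filter (fun j => pathVal S (j - 1) < pathVal S j)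
        = (Finset.Icc 1 n).filter (fun j => pv n S.1 (j-1) < pv n S.1 j) := by
      apply Finset.filter_congr
      intro j hj
      rw [Finset.mem_Icc] at hj
      rw [hpv S (j-1) (by omega), hpv S j hj.2]
    rw [hfil]
    apply Finset.prod_congr rfl
    intro j hj
    simp only [Finset.mem_filter, Finset.mem_Icc] at hj
    rw [hpv S (j-1) (by omega), hpv S j (by omega)]
  rw [Fintype.sum_congr _ _ hW]
  have e : SPath n ≃ {S : Fin (n+1) → Fin (n+1) // Ok n n S} :=
    { toFun := fun S => ⟨S.1, spath_ok S⟩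
      invFun := fun T => ⟨T.1, ok_spath T.1 T.2⟩
      left_inv := fun S => rfl
      right_inv := fun T => rfl }
  have h1 : (∑ a : SPath n, W n a.1) = ∑ S ∈ Finset.univ.filter (Ok n n), W n S := by
    refine Finset.sum_bij' (fun (a : SPath n) (_ : a ∈ Finset.univ) => a.1)
      (fun S hS => (⟨S, ok_spath S (by simpa using hS)⟩ : SPath n)) ?_ ?_ ?_ ?_ ?_
    · intro a _
      simp only [Finset.mem_filter, Finset.mem_univ, true_and]
      exact spath_ok a
    · intro S hS
      exact Finset.mem_univ _
    · intro a _
      exact Subtype.ext rfl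
    · intro S hS
      rfl
    · intro a _
      rfl
  rw [h1]
  have h2 : G n n = bellNumber n := by
    rw [G_eq n n, Nat.choose_self, one_mul]
  exact h2

end Aux
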